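/- If κ is an infinite cardinal with κ < 𝔠 and cf(κ) = ω, then there exists an almost disjoint family 𝒜 on ω with |𝒜| = κ such that for every ℬ ⊆ 𝒜 with |ℬ| = κ there exist A, B, C ∈ ℬ with A ∩ B ∩ C = ∅. -/

import Mathlib

open Cardinal Set

universe u

/-- `κ` is a caliber for `X`: every κ-indexed family of non-empty open sets
(repetitions allowed) has a κ-sized subfamily with non-empty intersection. -/
def IsCaliber (X : Type u) [TopologicalSpace X] (κ : Cardinal.{u}) : Prop :=
  ∀ {ι : Type u} (U : ι → Set X), #ι = κ → (∀ i, IsOpen (U i)) → (∀ i, (U i).Nonempty) →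
    ∃ J : Set ι, #J = κ ∧ (⋂ i ∈ J, U i).Nonempty

/-- `κ` is a precaliber for `X`: every κ-indexed family of non-empty open sets
has a κ-sized subfamily which is centered. -/
def IsPrecaliber (X : Type u) [TopologicalSpace X] (κ : Cardinal.{u}) : Prop :=
  ∀ {ι : Type u} (U : ι → Set X), #ι = κ → (∀ i, IsOpen (U i)) → (∀ i, (U i).Nonempty) →
    ∃ J : Set ι, #J = κ ∧
      ∀ s : Finset ι, ↑s ⊆ J → s.Nonempty → (⋂ i ∈ s, U i).Nonempty

/-- `κ` is a weak precaliber for `X`: every κ-indexed family of non-empty open sets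
has a κ-sized subfamily which is linked. -/
def IsWeakPrecaliber (X : Type u) [TopologicalSpace X] (κ : Cardinal.{u}) : Prop :=
  ∀ {ι : Type u} (U : ι → Set X), #ι = κ → (∀ i, IsOpen (U i)) → (∀ i, (U i).Nonempty) →
    ∃ J : Set ι, #J = κ ∧ ∀ i ∈ J, ∀ j ∈ J, (U i ∩ U j).Nonempty

/-- `κ` is a caliber* for `X`: every family of non-empty open sets of cardinality `κ`
has a subfamily of cardinality `κ` with non-empty intersection. -/
def IsCaliberStar (X : Type u) [TopologicalSpace X] (κ : Cardinal.{u}) : Prop :=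
  ∀ 𝒰 : Set (Set X), #𝒰 = κ → (∀ U ∈ 𝒰, IsOpen U) → (∀ U ∈ 𝒰, U.Nonempty) →
    ∃ 𝒱 ⊆ 𝒰, #𝒱 = κ ∧ (⋂₀ 𝒱).Nonempty

/-- `κ` is a precaliber* for `X`: every family of non-empty open sets of cardinality `κ`
has a centered subfamily of cardinality `κ`. -/
def IsPrecaliberStar (X : Type u) [TopologicalSpace X] (κ : Cardinal.{u}) : Prop :=
  ∀ 𝒰 : Set (Set X), #𝒰 = κ → (∀ U ∈ 𝒰, IsOpen U) → (∀ U ∈ 𝒰, U.Nonempty) →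
    ∃ 𝒱 ⊆ 𝒰, #𝒱 = κ ∧
      ∀ s : Finset (Set X), ↑s ⊆ 𝒱 → s.Nonempty → (⋂₀ (↑s : Set (Set X))).Nonempty

/-- `κ` is a weak precaliber* for `X`: every family of non-empty open sets of
cardinality `κ` has a linked subfamily of cardinality `κ`. -/
def IsWeakPrecaliberStar (X : Type u) [TopologicalSpace X] (κ : Cardinal.{u}) : Prop :=
  ∀ 𝒰 : Set (Set X), #𝒰 = κ → (∀ U ∈ 𝒰, IsOpen U) → (∀ U ∈ 𝒰, U.Nonempty) →
    ∃ 𝒱 ⊆ 𝒰, #𝒱 = κ ∧ ∀ U ∈ 𝒱, ∀ V ∈ 𝒱, (U ∩ V).Nonempty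

/-- `o X` : the number of open subsets of `X`. -/
def oCard (X : Type u) [TopologicalSpace X] : Cardinal.{u} :=
  #{U : Set X | IsOpen U}

/-- A cellular family: a pairwise disjoint collection of non-empty open sets. -/
def IsCellularFamily (X : Type u) [TopologicalSpace X] (𝒰 : Set (Set X)) : Prop :=
  (∀ U ∈ 𝒰, IsOpen U) ∧ (∀ U ∈ 𝒰, U.Nonempty) ∧ 𝒰.Pairwise Disjoint

namespace Stmt8Aux

/-- `n`-th code along the branch `x`. -/
def seg (x : ℕ → Bool) (n : ℕ) : ℕ := Encodable.encode ((List.range n).map x)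

lemma map_range_eq {x y : ℕ → Bool} {n m : ℕ}
    (h : (List.range n).map x = (List.range m).map y) : n = m ∧ ∀ i < n, x i = y i := by
  have hn : n = m := by simpa using congrArg List.length h
  subst hn
  refine ⟨rfl, fun i hi => ?_⟩
  have := congrArg (fun l => l[i]?) h
  simpa [List.getElem?_map, List.getElem?_range hi] using this

lemma seg_eq {x y : ℕ → Bool} {n m : ℕ} (h : seg x n = seg y m) :
    n = m ∧ ∀ i < n, x i = y i :=
  map_range_eq (Encodable.encode_injective h)

/-- The branch set of `x`. -/
def branch (x : ℕ → Bool) : Set ℕ := Set.range (fun n => seg x (n + 1))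

lemma branch_infinite (x : ℕ → Bool) : (branch x).Infinite := by
  apply Set.infinite_range_of_injective
  intro n m h
  have := (seg_eq h).1
  omega

lemma branch_ad {x y : ℕ → Bool} (h : x ≠ y) : (branch x ∩ branch y).Finite := by
  obtain ⟨k, hk⟩ := Function.ne_iff.mp h
  have hsub : branch x ∩ branch y ⊆ (fun n => seg x (n + 1)) '' Set.Iio k := by
    rintro z ⟨⟨n, rfl⟩, ⟨m, hm⟩⟩
    obtain ⟨heq, hall⟩ := seg_eq hm.symm
    refine ⟨n, ?_, rfl⟩
    simp only [Set.mem_Iio]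
    by_contra hkn
    exact hk (hall k (by omega))
  exact ((Set.finite_Iio k).image _).subset hsub

lemma branch_inj : Function.Injective branch := by
  intro x y h
  by_contra hne
  have := branch_ad hne
  rw [h, Set.inter_self] at this
  exact branch_infinite y this



lemma exists_seq (κ : Cardinal.{0}) (hκ : ℵ₀ ≤ κ) (hcof : κ.ord.cof = ℵ₀) :
    ∃ c : ℕ → Cardinal.{0}, (∀ n, c n < κ) ∧ (⨆ n, c n) = κ := by
  obtain ⟨ι, f, hlsub, hι⟩ := Ordinal.exists_lsub_cof κ.ord
  rw [hcof] at hι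
  obtain ⟨eqv⟩ := Cardinal.eq.mp (hι.trans (Cardinal.mk_eq_aleph0 ℕ).symm)
  set g : ℕ → Ordinal := f ∘ eqv.symm with hg
  have hglt : ∀ n, g n < κ.ord := fun n => hlsub ▸ Ordinal.lt_lsub f _
  refine ⟨fun n => (g n).card, fun n => Cardinal.lt_ord.mp (hglt n), ?_⟩
  have key : ∀ μ < κ, ∃ n, μ ≤ (g n).card := by
    intro μ hμ
    by_contra hcon
    push_neg at hcon
    have hle : Ordinal.lsub f ≤ μ.ord := by
      apply Ordinal.lsub_le
      intro i
      have : (g (eqv i)).card < μ := hcon (eqv i)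
      have h2 : g (eqv i) < μ.ord := Cardinal.lt_ord.mpr this
      simpa [hg] using h2
    rw [hlsub] at hle
    exact absurd (Cardinal.ord_lt_ord.mpr hμ) hle.not_gt
  refine le_antisymm (ciSup_le' fun n => (Cardinal.lt_ord.mp (hglt n)).le) ?_
  by_contra hcon
  push_neg at hcon
  set s := ⨆ n, (g n).card with hs
  have hlt : s < κ := hcon
  have hsucc : Order.succ s ≤ κ := Order.succ_le_of_lt hlt
  rcases lt_or_eq_of_le hsucc with h | h
  · obtain ⟨n, hn⟩ := key _ h
    have h2 : (g n).card ≤ s := le_ciSup (Cardinal.bddAbove_range _) n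
    exact absurd (hn.trans h2) (Order.lt_succ s).not_ge
  · have hs0 : ℵ₀ ≤ s := by
      by_contra h0
      push_neg at h0
      obtain ⟨m, hm⟩ := Cardinal.lt_aleph0.mp h0
      have : κ < ℵ₀ := by
        rw [← h, hm, ← Cardinal.nat_succ]
        exact Cardinal.nat_lt_aleph0 (m + 1)
      exact absurd hκ this.not_ge
    have hreg := (Cardinal.isRegular_succ hs0).2
    rw [h, hcof] at hreg
    exact absurd (hs0.trans_lt (h ▸ Order.lt_succ s)) hreg.not_gt
end Stmt8Aux

open Stmt8Aux


theorem stmt8 (κ : Cardinal.{0}) (hκ : ℵ₀ ≤ κ) (hlt : κ < Cardinal.continuum)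
    (hcof : κ.ord.cof = ℵ₀) :
    ∃ 𝒜 : Set (Set ℕ), #𝒜 = κ ∧ (∀ A ∈ 𝒜, A.Infinite) ∧
      (𝒜.Pairwise fun A B => (A ∩ B).Finite) ∧
      ∀ ℬ ⊆ 𝒜, #ℬ = κ → ∃ A ∈ ℬ, ∃ B ∈ ℬ, ∃ C ∈ ℬ, A ∩ B ∩ C = ∅ := by
  classical
  obtain ⟨c, hclt, hsupc⟩ := exists_seq κ hκ hcof
  have hcant : #(ℕ → Bool) = Cardinal.continuum := by
    rw [Cardinal.mk_arrow]
    simp [Cardinal.two_power_aleph0]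
  have hSn : ∀ n, ∃ S : Set (ℕ → Bool), #S = c n := fun n =>
    Cardinal.le_mk_iff_exists_set.mp (by rw [hcant]; exact ((hclt n).trans hlt).le)
  choose S hS using hSn
  set e : ℕ × ℕ ≃ ℕ := Denumerable.eqv (ℕ × ℕ) with he
  set H : ℕ → (ℕ → Bool) → Set ℕ :=
    fun n v => e '' (({n} : Set ℕ) ×ˢ branch v) with hH
  set G : (Σ n : ℕ, ↥(S n)) → Set ℕ := fun p => H p.1 ↑p.2 with hG
  have hGbase : ∀ p q : (Σ n : ℕ, ↥(S n)), G p ∩ G q =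
      e '' ((({p.1} : Set ℕ) ∩ {q.1}) ×ˢ (branch ↑p.2 ∩ branch ↑q.2)) := by
    intro p q
    simp only [hG, hH]
    rw [← Set.image_inter e.injective, Set.prod_inter_prod]
  have hGempty : ∀ p q : (Σ n : ℕ, ↥(S n)), p.1 ≠ q.1 → G p ∩ G q = ∅ := by
    intro p q hne
    rw [hGbase]
    have : ({p.1} : Set ℕ) ∩ {q.1} = ∅ := by
      ext a; simp only [Set.mem_inter_iff, Set.mem_singleton_iff, Set.mem_empty_iff_false,
        iff_false, not_and]
      rintro rfl; exact hne
    rw [this, Set.empty_prod, Set.image_empty]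
  have hGinj : Function.Injective G := by
    rintro ⟨n, x⟩ ⟨m, y⟩ h
    have h2 : (({n} : Set ℕ) ×ˢ branch ↑x) = ({m} : Set ℕ) ×ˢ branch ↑y :=
      (Set.image_eq_image e.injective).mp h
    obtain ⟨a, ha⟩ := (branch_infinite ↑x).nonempty
    have hmem : ((n, a) : ℕ × ℕ) ∈ (({m} : Set ℕ) ×ˢ branch ↑y) := by
      rw [← h2]; exact ⟨rfl, ha⟩
    obtain rfl : n = m := hmem.1
    have hxy : branch (↑x : ℕ → Bool) = branch ↑y := by
      ext b
      constructor
      · intro hb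
        have : ((n, b) : ℕ × ℕ) ∈ (({n} : Set ℕ) ×ˢ branch ↑y) := h2 ▸ ⟨rfl, hb⟩
        exact this.2
      · intro hb
        have : ((n, b) : ℕ × ℕ) ∈ (({n} : Set ℕ) ×ˢ branch ↑x) := h2.symm ▸ ⟨rfl, hb⟩
        exact this.2
    have : (x : ℕ → Bool) = ↑y := branch_inj hxy
    congr
    exact Subtype.ext this
  refine ⟨Set.range G, ?_, ?_, ?_, ?_⟩
  · rw [Cardinal.mk_range_eq G hGinj, Cardinal.mk_sigma]
    simp only [hS]
    refine le_antisymm ?_ ?_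
    · calc Cardinal.sum c ≤ #ℕ * ⨆ n, c n := Cardinal.sum_le_mk_mul_iSup c
        _ = ℵ₀ * κ := by rw [hsupc, Cardinal.mk_eq_aleph0]
        _ = κ := by rw [Cardinal.mul_eq_max le_rfl hκ, max_eq_right hκ]
    · rw [← hsupc]; exact Cardinal.iSup_le_sum c
  · rintro A ⟨p, rfl⟩
    refine Set.Infinite.image (e.injective.injOn) ?_
    exact Set.infinite_prod.mpr (Or.inr ⟨branch_infinite _, ⟨p.1, rfl⟩⟩)
  · rintro _ ⟨p, rfl⟩ _ ⟨q, rfl⟩ hne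
    rcases eq_or_ne p.1 q.1 with h1 | h1
    · obtain ⟨n, x⟩ := p
      obtain ⟨m, y⟩ := q
      obtain rfl : n = m := h1
      have hxy : (x : ℕ → Bool) ≠ ↑y := by
        intro hc
        exact hne (by rw [Subtype.ext hc])
      rw [hGbase]
      exact (((Set.finite_singleton n).inter_of_left _).prod (branch_ad hxy)).image _
    · rw [hGempty _ _ h1]
      exact Set.finite_empty
  · intro ℬ hsub hB
    have hFex : ∀ b : ℬ, ∃ p, G p = (b : Set ℕ) := fun b => hsub b.2
    choose F hF using hFex
    have hBne : ℬ.Nonempty := by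
      rw [← Set.nonempty_coe_sort, ← Cardinal.mk_ne_zero_iff, hB]
      exact (Cardinal.aleph0_pos.trans_le hκ).ne'
    obtain ⟨B₀, hB₀⟩ := hBne
    by_cases hall : ∀ b : ℬ, (F b).1 = (F ⟨B₀, hB₀⟩).1
    · -- all in one level : contradiction with #ℬ = κ
      exfalso
      set n₀ := (F ⟨B₀, hB₀⟩).1 with hn₀
      have hj : ∀ b : ℬ, ((F b).2 : ℕ → Bool) ∈ S n₀ := by
        intro b
        rw [← hall b]
        exact (F b).2.2
      set j : ℬ → ↥(S n₀) := fun b => ⟨_, hj b⟩ with hjdef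
      have hjinj : Function.Injective j := by
        intro b₁ b₂ hj12
        have hco : ((F b₁).2 : ℕ → Bool) = ((F b₂).2 : ℕ → Bool) :=
          congrArg Subtype.val hj12
        have hGeq : G (F b₁) = G (F b₂) := by
          show H (F b₁).1 ↑(F b₁).2 = H (F b₂).1 ↑(F b₂).2
          exact ((congrArg (fun n => H n ↑(F b₁).2) (hall b₁)).trans
            (congrArg (H n₀) hco)).trans
            (congrArg (fun n => H n ↑(F b₂).2) (hall b₂)).symm
        have : (b₁ : Set ℕ) = ↑b₂ := by rw [← hF b₁, ← hF b₂, hGeq]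
        exact Subtype.ext this
      have : κ ≤ c n₀ := by
        rw [← hB, ← hS n₀]
        exact Cardinal.mk_le_of_injective hjinj
      exact absurd this (hclt n₀).not_ge
    · push_neg at hall
      obtain ⟨b, hb⟩ := hall
      refine ⟨↑b, b.2, B₀, hB₀, ↑b, b.2, ?_⟩
      have hFB₀ : G (F ⟨B₀, hB₀⟩) = B₀ := hF ⟨B₀, hB₀⟩
      have : (b : Set ℕ) ∩ B₀ = ∅ := by
        rw [← hF b, ← hFB₀]
        exact hGempty _ _ hb
      rw [this, Set.empty_inter]
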